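/- Let 0 ≤ p ≤ 1 and let s, t be positive integers. Let μ be the infinite product of Bernoulli(p) measures on sequences ω : ℕ → {0,1}, and define the stopping time Y(ω) as the smallest n such that either ∑_{i<n} ω_i = s or ∑_{i<n} (1 - ω_i) = t. Then for every integer k, μ{ω : Y(ω) = k} = C(k-1, s-1) p^s (1-p)^{k-s} · 1{s ≤ k ≤ s+t-1} + C(k-1, t-1) p^{k-t} (1-p)^t · 1{t ≤ k ≤ s+t-1}. -/

import Mathlib

open MeasureTheory

/-- Number of successes (coordinates equal to 1/true) among the first `n` coordinates. -/
def numSuccesses (ω : ℕ → Bool) (n : ℕ) : ℕ :=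
  ((Finset.range n).filter fun i => ω i = true).card

/-- Number of failures (coordinates equal to 0/false) among the first `n` coordinates. -/
def numFailures (ω : ℕ → Bool) (n : ℕ) : ℕ :=
  ((Finset.range n).filter fun i => ω i = false).card

/-- The stopping time: the smallest `n` such that among the first `n` coordinates
there are either `s` successes or `t` failures. -/
noncomputable def snbStop (s t : ℕ) (ω : ℕ → Bool) : ℕ :=
  sInf {n | numSuccesses ω n = s ∨ numFailures ω n = t}

/-- If `μ` is the infinite product of Bernoulli(p) measures on sequences
`ω : ℕ → {0,1}` (characterized by its values on cylinder sets), then the stopping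
time `Y` of the SNB(p, s, t) process has the stopped negative binomial mass function. -/
lemma numSuccesses_zero (ω : ℕ → Bool) : numSuccesses ω 0 = 0 := by simp [numSuccesses]
lemma numFailures_zero (ω : ℕ → Bool) : numFailures ω 0 = 0 := by simp [numFailures]

lemma numSuccesses_succ (ω : ℕ → Bool) (n : ℕ) :
    numSuccesses ω (n + 1) = numSuccesses ω n + if ω n = true then 1 else 0 := by
  simp only [numSuccesses, Finset.range_add_one, Finset.filter_insert]
  split
  · rw [Finset.card_insert_of_notMem (by simp)]
  · simp

lemma numFailures_succ (ω : ℕ → Bool) (n : ℕ) :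
    numFailures ω (n + 1) = numFailures ω n + if ω n = false then 1 else 0 := by
  simp only [numFailures, Finset.range_add_one, Finset.filter_insert]
  split
  · rw [Finset.card_insert_of_notMem (by simp)]
  · simp

lemma numSuccesses_mono (ω : ℕ → Bool) : Monotone (numSuccesses ω) := fun a b h =>
  Finset.card_le_card (Finset.filter_subset_filter _ (Finset.range_subset_range.2 h))

lemma numFailures_mono (ω : ℕ → Bool) : Monotone (numFailures ω) := fun a b h =>
  Finset.card_le_card (Finset.filter_subset_filter _ (Finset.range_subset_range.2 h))

lemma numSuccesses_add_numFailures (ω : ℕ → Bool) (n : ℕ) :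
    numSuccesses ω n + numFailures ω n = n := by
  induction n with
  | zero => simp [numSuccesses, numFailures]
  | succ n ih =>
    rw [numSuccesses_succ, numFailures_succ]
    cases h : ω n <;> simp <;> omega

lemma nat_ivt {f : ℕ → ℕ} (h0 : f 0 = 0) (hstep : ∀ n, f (n + 1) ≤ f n + 1) :
    ∀ M s, s ≤ f M → ∃ n ≤ M, f n = s := by
  intro M
  induction M with
  | zero => intro s hs; exact ⟨0, le_rfl, by omega⟩
  | succ M ih =>
    intro s hs
    by_cases h : s ≤ f M
    · obtain ⟨n, hn, hfn⟩ := ih s h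
      exact ⟨n, by omega, hfn⟩
    · exact ⟨M + 1, le_rfl, by have := hstep M; omega⟩

lemma succ_step (ω : ℕ → Bool) : ∀ n, numSuccesses ω (n+1) ≤ numSuccesses ω n + 1 := by
  intro n; rw [numSuccesses_succ]; split <;> omega

lemma fail_step (ω : ℕ → Bool) : ∀ n, numFailures ω (n+1) ≤ numFailures ω n + 1 := by
  intro n; rw [numFailures_succ]; split <;> omega

lemma stopSet_nonempty (s t : ℕ) (ω : ℕ → Bool) :
    {n | numSuccesses ω n = s ∨ numFailures ω n = t}.Nonempty := by
  have hadd := numSuccesses_add_numFailures ω (s + t)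
  by_cases h : s ≤ numSuccesses ω (s + t)
  · obtain ⟨n, _, hn⟩ := nat_ivt (numSuccesses_zero ω) (succ_step ω) (s + t) s h
    exact ⟨n, Or.inl hn⟩
  · obtain ⟨n, _, hn⟩ := nat_ivt (numFailures_zero ω) (fail_step ω) (s + t) t (by omega)
    exact ⟨n, Or.inr hn⟩

lemma snbStop_eq_iff (s t : ℕ) (ω : ℕ → Bool) (k : ℕ) :
    snbStop s t ω = k ↔
      ((numSuccesses ω k = s ∨ numFailures ω k = t) ∧
        ∀ j < k, numSuccesses ω j ≠ s ∧ numFailures ω j ≠ t) := by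
  have hne := stopSet_nonempty s t ω
  constructor
  · rintro rfl
    refine ⟨Nat.sInf_mem hne, fun j hj => ?_⟩
    have := Nat.notMem_of_lt_sInf hj
    simpa [not_or] using this
  · rintro ⟨h1, h2⟩
    refine le_antisymm (Nat.sInf_le h1) ?_
    by_contra h
    push_neg at h
    have hmem := Nat.sInf_mem hne
    exact absurd hmem (by simpa [not_or, snbStop] using h2 _ h)

lemma numSuccesses_congr {ω ω' : ℕ → Bool} {k : ℕ} (h : ∀ i < k, ω i = ω' i) {n : ℕ}
    (hn : n ≤ k) : numSuccesses ω n = numSuccesses ω' n := by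
  unfold numSuccesses
  congr 1
  apply Finset.filter_congr
  intro i hi
  rw [h i (lt_of_lt_of_le (Finset.mem_range.1 hi) hn)]

lemma numFailures_congr {ω ω' : ℕ → Bool} {k : ℕ} (h : ∀ i < k, ω i = ω' i) {n : ℕ}
    (hn : n ≤ k) : numFailures ω n = numFailures ω' n := by
  unfold numFailures
  congr 1
  apply Finset.filter_congr
  intro i hi
  rw [h i (lt_of_lt_of_le (Finset.mem_range.1 hi) hn)]

lemma snbStop_eq_congr {s t k : ℕ} {ω ω' : ℕ → Bool} (h : ∀ i < k, ω i = ω' i) :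
    snbStop s t ω = k ↔ snbStop s t ω' = k := by
  rw [snbStop_eq_iff, snbStop_eq_iff,
    numSuccesses_congr h le_rfl, numFailures_congr h le_rfl]
  constructor <;> rintro ⟨h1, h2⟩ <;> refine ⟨h1, fun j hj => ?_⟩
  · rw [← numSuccesses_congr h hj.le, ← numFailures_congr h hj.le]; exact h2 j hj
  · rw [numSuccesses_congr h hj.le, numFailures_congr h hj.le]; exact h2 j hj

def extendB (k : ℕ) (b : Fin k → Bool) : ℕ → Bool := fun i => if h : i < k then b ⟨i, h⟩ else false

noncomputable def cnt (k : ℕ) (v : Bool) (b : Fin k → Bool) : ℕ :=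
  (Finset.univ.filter fun i => b i = v).card

lemma cnt_true_add_false (k : ℕ) (b : Fin k → Bool) : cnt k true b + cnt k false b = k := by
  classical
  unfold cnt
  rw [Finset.card_filter, Finset.card_filter, ← Finset.sum_add_distrib]
  have : ∀ i : Fin k, ((if b i = true then 1 else 0) + (if b i = false then 1 else 0)) = 1 := by
    intro i; cases h : b i <;> simp
  simp [this]

lemma cnt_le (k : ℕ) (v : Bool) (b : Fin k → Bool) : cnt k v b ≤ k := by
  have := Finset.card_filter_le Finset.univ (fun i : Fin k => b i = v)
  simpa [cnt] using this

lemma numSuccesses_extendB (k : ℕ) (b : Fin k → Bool) :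
    numSuccesses (extendB k b) k = cnt k true b := by
  classical
  unfold numSuccesses cnt
  rw [Finset.card_filter, Finset.card_filter,
    ← Fin.sum_univ_eq_sum_range (fun i => if extendB k b i = true then 1 else 0) k]
  apply Finset.sum_congr rfl
  intro i _
  simp [extendB, i.isLt]

lemma numFailures_extendB (k : ℕ) (b : Fin k → Bool) :
    numFailures (extendB k b) k = cnt k false b := by
  classical
  unfold numFailures cnt
  rw [Finset.card_filter, Finset.card_filter,
    ← Fin.sum_univ_eq_sum_range (fun i => if extendB k b i = false then 1 else 0) k]
  apply Finset.sum_congr rfl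
  intro i _
  simp [extendB, i.isLt]

lemma stop_succ_true_iff {s t : ℕ} (hs : 0 < s) (ht : 0 < t) (ω : ℕ → Bool) (m : ℕ) :
    (snbStop s t ω = m + 1 ∧ numSuccesses ω (m + 1) = s) ↔
      (s ≤ m + 1 ∧ m + 1 ≤ s + t - 1 ∧ numSuccesses ω (m + 1) = s ∧ ω m = true) := by
  constructor
  · rintro ⟨hstop, hf⟩
    rw [snbStop_eq_iff] at hstop
    obtain ⟨hhit, hno⟩ := hstop
    have hstep := numSuccesses_succ ω m
    have hgstep := numFailures_succ ω m
    have hωm : ω m = true := by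
      by_contra h
      rw [if_neg h] at hstep
      exact (hno m (Nat.lt_succ_self m)).1 (by omega)
    have hgle : numFailures ω (m + 1) < t := by
      by_contra hge
      push_neg at hge
      have ht' : t ≤ numFailures ω m := by
        rw [hωm] at hgstep; simp at hgstep; omega
      obtain ⟨j, hj, hjt⟩ := nat_ivt (numFailures_zero ω) (fail_step ω) m t ht'
      exact (hno j (by omega)).2 hjt
    have hadd := numSuccesses_add_numFailures ω (m + 1)
    exact ⟨by omega, by omega, hf, hωm⟩
  · rintro ⟨hsk, hk, hf, hωm⟩
    refine ⟨?_, hf⟩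
    rw [snbStop_eq_iff]
    refine ⟨Or.inl hf, fun j hj => ?_⟩
    have hstep := numSuccesses_succ ω m
    rw [hωm] at hstep
    simp at hstep
    have hmono := numSuccesses_mono ω (show j ≤ m by omega)
    have hadd := numSuccesses_add_numFailures ω (m + 1)
    have haddj := numSuccesses_add_numFailures ω j
    have hgmono := numFailures_mono ω (show j ≤ m + 1 by omega)
    constructor <;> omega

lemma stop_succ_false_iff {s t : ℕ} (hs : 0 < s) (ht : 0 < t) (ω : ℕ → Bool) (m : ℕ) :
    (snbStop s t ω = m + 1 ∧ numFailures ω (m + 1) = t) ↔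
      (t ≤ m + 1 ∧ m + 1 ≤ s + t - 1 ∧ numFailures ω (m + 1) = t ∧ ω m = false) := by
  constructor
  · rintro ⟨hstop, hf⟩
    rw [snbStop_eq_iff] at hstop
    obtain ⟨hhit, hno⟩ := hstop
    have hstep := numFailures_succ ω m
    have hgstep := numSuccesses_succ ω m
    have hωm : ω m = false := by
      by_contra h
      rw [if_neg h] at hstep
      exact (hno m (Nat.lt_succ_self m)).2 (by omega)
    have hgle : numSuccesses ω (m + 1) < s := by
      by_contra hge
      push_neg at hge
      have hs' : s ≤ numSuccesses ω m := by
        rw [hωm] at hgstep; simp at hgstep; omega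
      obtain ⟨j, hj, hjt⟩ := nat_ivt (numSuccesses_zero ω) (succ_step ω) m s hs'
      exact (hno j (by omega)).1 hjt
    have hadd := numSuccesses_add_numFailures ω (m + 1)
    exact ⟨by omega, by omega, hf, hωm⟩
  · rintro ⟨hsk, hk, hf, hωm⟩
    refine ⟨?_, hf⟩
    rw [snbStop_eq_iff]
    refine ⟨Or.inr hf, fun j hj => ?_⟩
    have hstep := numFailures_succ ω m
    rw [hωm] at hstep
    simp at hstep
    have hmono := numFailures_mono ω (show j ≤ m by omega)
    have hadd := numSuccesses_add_numFailures ω (m + 1)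
    have haddj := numSuccesses_add_numFailures ω j
    have hgmono := numSuccesses_mono ω (show j ≤ m + 1 by omega)
    constructor <;> omega

open Finset in
lemma card_cnt_eq_and_apply (k s : ℕ) (hs : 0 < s) (v : Bool) (e : Fin k) :
    (Finset.univ.filter fun b : Fin k → Bool => cnt k v b = s ∧ b e = v).card
      = (k - 1).choose (s - 1) := by
  classical
  have hkey : (Finset.univ.filter fun b : Fin k → Bool => cnt k v b = s ∧ b e = v).card
      = ((Finset.univ.erase e).powersetCard (s - 1)).card := by
    apply Finset.card_bij' (fun b _ => (Finset.univ.filter fun i => b i = v).erase e)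
      (fun S _ => fun i => if i = e ∨ i ∈ S then v else !v)
    · intro b hb
      simp only [mem_filter, mem_univ, true_and] at hb
      rw [mem_powersetCard]
      constructor
      · intro x hx
        rw [mem_erase] at hx ⊢
        exact ⟨hx.1, mem_univ x⟩
      · rw [Finset.card_erase_of_mem (by simp [hb.2])]
        have : (Finset.univ.filter fun i => b i = v).card = s := hb.1
        omega
    · intro S hS
      rw [mem_powersetCard] at hS
      obtain ⟨hsub, hcard⟩ := hS
      have heS : e ∉ S := fun h => (Finset.mem_erase.1 (hsub h)).1 rfl
      simp only [mem_filter, mem_univ, true_and]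
      constructor
      · have hfe : (Finset.univ.filter fun i =>
            (if i = e ∨ i ∈ S then v else !v) = v) = insert e S := by
          ext x
          simp only [mem_filter, mem_univ, true_and, mem_insert]
          constructor
          · intro hx
            by_contra hc
            push_neg at hc
            rw [if_neg (by tauto)] at hx
            exact Bool.not_ne_self v (by rw [hx])
          · intro hx
            rw [if_pos hx]
        rw [cnt, hfe, Finset.card_insert_of_notMem heS, hcard]
        omega
      · simp
    · intro b hb
      simp only [mem_filter, mem_univ, true_and] at hb
      funext x
      by_cases hx : b x = v
      · rw [if_pos]
        · exact hx.symm
        · by_cases hxe : x = e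
          · exact Or.inl hxe
          · exact Or.inr (Finset.mem_erase.2 ⟨hxe, by simp [hx]⟩)
      · rw [if_neg]
        · cases v <;> cases hbx : b x <;> simp_all
        · rintro (rfl | hmem)
          · exact hx hb.2
          · exact hx (Finset.mem_filter.1 (Finset.mem_of_mem_erase hmem)).2
    · intro S hS
      rw [mem_powersetCard] at hS
      obtain ⟨hsub, hcard⟩ := hS
      have heS : e ∉ S := fun h => (Finset.mem_erase.1 (hsub h)).1 rfl
      have hfe : (Finset.univ.filter fun i =>
          (if i = e ∨ i ∈ S then v else !v) = v) = insert e S := by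
        ext x
        simp only [mem_filter, mem_univ, true_and, mem_insert]
        constructor
        · intro hx
          by_contra hc
          push_neg at hc
          rw [if_neg (by tauto)] at hx
          exact Bool.not_ne_self v (by rw [hx])
        · intro hx
          rw [if_pos hx]
      rw [hfe, Finset.erase_insert heS]
  rw [hkey, Finset.card_powersetCard, Finset.card_erase_of_mem (Finset.mem_univ e),
    Finset.card_univ, Fintype.card_fin]

lemma extendB_last (m : ℕ) (b : Fin (m + 1) → Bool) : extendB (m + 1) b m = b (Fin.last m) := by
  simp [extendB, Fin.last]

lemma cardGA {s t k : ℕ} (hs : 0 < s) (ht : 0 < t) [DecidablePred fun b : Fin k → Bool => snbStop s t (extendB k b) = k ∧ cnt k true b = s] :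
    (Finset.univ.filter fun b : Fin k → Bool =>
        snbStop s t (extendB k b) = k ∧ cnt k true b = s).card
      = if s ≤ k ∧ k ≤ s + t - 1 then (k - 1).choose (s - 1) else 0 := by
  classical
  by_cases hcond : s ≤ k ∧ k ≤ s + t - 1
  · rw [if_pos hcond]
    obtain ⟨m, rfl⟩ : ∃ m, k = m + 1 := ⟨k - 1, by omega⟩
    have hiff : ∀ b : Fin (m + 1) → Bool,
        (snbStop s t (extendB (m + 1) b) = m + 1 ∧ cnt (m + 1) true b = s) ↔
          (cnt (m + 1) true b = s ∧ b (Fin.last m) = true) := by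
      intro b
      rw [← numSuccesses_extendB, ← extendB_last m b]
      rw [stop_succ_true_iff hs ht (extendB (m + 1) b) m]
      tauto
    rw [Finset.filter_congr (fun b _ => hiff b)]
    exact card_cnt_eq_and_apply (m + 1) s hs true (Fin.last m)
  · rw [if_neg hcond]
    rw [Finset.card_eq_zero, Finset.filter_eq_empty_iff]
    rintro b - ⟨hstop, hcnt⟩
    have hsk : s ≤ k := hcnt ▸ cnt_le k true b
    obtain ⟨m, rfl⟩ : ∃ m, k = m + 1 := ⟨k - 1, by omega⟩
    have := (stop_succ_true_iff hs ht (extendB (m + 1) b) m).1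
      ⟨hstop, by rwa [numSuccesses_extendB]⟩
    exact hcond ⟨this.1, this.2.1⟩

lemma cardGB {s t k : ℕ} (hs : 0 < s) (ht : 0 < t) [DecidablePred fun b : Fin k → Bool => snbStop s t (extendB k b) = k ∧ ¬ cnt k true b = s] :
    (Finset.univ.filter fun b : Fin k → Bool =>
        snbStop s t (extendB k b) = k ∧ ¬ cnt k true b = s).card
      = if t ≤ k ∧ k ≤ s + t - 1 then (k - 1).choose (t - 1) else 0 := by
  classical
  have hiff : ∀ b : Fin k → Bool,
      (snbStop s t (extendB k b) = k ∧ ¬ cnt k true b = s) ↔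
        (snbStop s t (extendB k b) = k ∧ cnt k false b = t ∧ ¬ cnt k true b = s) := by
    intro b
    constructor
    · rintro ⟨hstop, hne⟩
      refine ⟨hstop, ?_, hne⟩
      have hhit := ((snbStop_eq_iff s t (extendB k b) k).1 hstop).1
      rw [numSuccesses_extendB, numFailures_extendB] at hhit
      tauto
    · tauto
  by_cases hcond : t ≤ k ∧ k ≤ s + t - 1
  · rw [if_pos hcond]
    obtain ⟨m, rfl⟩ : ∃ m, k = m + 1 := ⟨k - 1, by omega⟩
    have hiff2 : ∀ b : Fin (m + 1) → Bool,
        (snbStop s t (extendB (m + 1) b) = m + 1 ∧ ¬ cnt (m + 1) true b = s) ↔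
          (cnt (m + 1) false b = t ∧ b (Fin.last m) = false) := by
      intro b
      rw [hiff b]
      have htot := cnt_true_add_false (m + 1) b
      constructor
      · rintro ⟨hstop, hft, hne⟩
        have := (stop_succ_false_iff hs ht (extendB (m + 1) b) m).1
          ⟨hstop, by rwa [numFailures_extendB]⟩
        rw [numFailures_extendB, extendB_last] at this
        exact ⟨this.2.2.1, this.2.2.2⟩
      · rintro ⟨hft, hlast⟩
        have hstop := (stop_succ_false_iff hs ht (extendB (m + 1) b) m).2
          ⟨by omega, hcond.2, by rwa [numFailures_extendB], by rwa [extendB_last]⟩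
        exact ⟨hstop.1, hft, by omega⟩
    rw [Finset.filter_congr (fun b _ => hiff2 b)]
    exact card_cnt_eq_and_apply (m + 1) t ht false (Fin.last m)
  · rw [if_neg hcond]
    rw [Finset.card_eq_zero, Finset.filter_eq_empty_iff]
    rintro b - hb
    rw [hiff b] at hb
    obtain ⟨hstop, hft, hne⟩ := hb
    have htk : t ≤ k := hft ▸ cnt_le k false b
    obtain ⟨m, rfl⟩ : ∃ m, k = m + 1 := ⟨k - 1, by omega⟩
    have := (stop_succ_false_iff hs ht (extendB (m + 1) b) m).1
      ⟨hstop, by rwa [numFailures_extendB]⟩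
    exact hcond ⟨this.1, this.2.1⟩

theorem snb_stoppingTime_pmf (p : ℝ) (hp0 : 0 ≤ p) (hp1 : p ≤ 1)
    (s t : ℕ) (hs : 0 < s) (ht : 0 < t)
    (μ : Measure (ℕ → Bool)) [IsProbabilityMeasure μ]
    (hμ : ∀ (n : ℕ) (b : Fin n → Bool),
      μ {ω | ∀ i : Fin n, ω (i : ℕ) = b i} =
        ∏ i : Fin n, ENNReal.ofReal (if b i then p else 1 - p))
    (k : ℕ) :
    μ {ω | snbStop s t ω = k} =
      ENNReal.ofReal
        ((if s ≤ k ∧ k ≤ s + t - 1 then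
            (Nat.choose (k - 1) (s - 1) : ℝ) * p ^ s * (1 - p) ^ (k - s) else 0) +
         (if t ≤ k ∧ k ≤ s + t - 1 then
            (Nat.choose (k - 1) (t - 1) : ℝ) * p ^ (k - t) * (1 - p) ^ t else 0)) := by
  classical
  have h1p : (0 : ℝ) ≤ 1 - p := by linarith
  set Cyl : (Fin k → Bool) → Set (ℕ → Bool) :=
    fun b => {ω | ∀ i : Fin k, ω (i : ℕ) = b i} with hCyl
  set G : Finset (Fin k → Bool) :=
    Finset.univ.filter (fun b : Fin k → Bool => snbStop s t (extendB k b) = k) with hGdef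
  have hmeas : ∀ b : Fin k → Bool, MeasurableSet (Cyl b) := by
    intro b
    have : Cyl b = ⋂ i : Fin k, (fun ω : ℕ → Bool => ω (i : ℕ)) ⁻¹' {b i} := by
      ext ω; simp [hCyl]
    rw [this]
    exact MeasurableSet.iInter fun i =>
      (measurableSet_singleton (b i)).preimage (measurable_pi_apply _)
  have hEvent : {ω : ℕ → Bool | snbStop s t ω = k} = ⋃ b ∈ G, Cyl b := by
    ext ω
    simp only [Set.mem_setOf_eq, Set.mem_iUnion, hGdef, Finset.mem_filter,
      Finset.mem_univ, true_and, hCyl, exists_prop]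
    constructor
    · intro h
      refine ⟨fun i => ω i, ?_, fun i => rfl⟩
      have hagree : ∀ i < k, ω i = extendB k (fun j : Fin k => ω (j : ℕ)) i := by
        intro i hi; simp [extendB, hi]
      exact (snbStop_eq_congr hagree).1 h
    · rintro ⟨b, hb, hω⟩
      have hagree : ∀ i < k, ω i = extendB k b i := by
        intro i hi
        have := hω ⟨i, hi⟩
        simp only [extendB, hi, dif_pos]
        exact this
      exact (snbStop_eq_congr hagree).2 hb
  have hdisj : (↑G : Set (Fin k → Bool)).PairwiseDisjoint Cyl := by
    intro b _ b' _ hne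
    simp only [Function.onFun]
    rw [Set.disjoint_left]
    intro ω hω hω'
    exact hne (funext fun i => by rw [← hω i, ← hω' i])
  have hterm : ∀ b ∈ G, μ (Cyl b)
      = ENNReal.ofReal (p ^ cnt k true b * (1 - p) ^ cnt k false b) := by
    intro b _
    rw [hCyl]
    rw [hμ k b, ← ENNReal.ofReal_prod_of_nonneg
      (fun i _ => by split <;> [exact hp0; exact h1p])]
    congr 1
    rw [Finset.prod_ite _ _, Finset.prod_const, Finset.prod_const]
    have e2 : (Finset.univ.filter fun i : Fin k => ¬ (b i = true))
        = Finset.univ.filter fun i : Fin k => b i = false :=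
      Finset.filter_congr (fun i _ => by simp)
    rw [e2]
    have c1 : (Finset.univ.filter fun i : Fin k => b i = true).card = cnt k true b := by
      unfold cnt; congr 1
    have c2 : (Finset.univ.filter fun i : Fin k => b i = false).card = cnt k false b := by
      unfold cnt; congr 1
    rw [c1, c2]
  rw [hEvent, measure_biUnion_finset hdisj (fun b _ => hmeas b),
    Finset.sum_congr rfl hterm,
    ← Finset.sum_filter_add_sum_filter_not G (fun b => cnt k true b = s)]
  have hx1 : (0 : ℝ) ≤ p ^ s * (1 - p) ^ (k - s) :=
    mul_nonneg (pow_nonneg hp0 _) (pow_nonneg h1p _)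
  have hx2 : (0 : ℝ) ≤ p ^ (k - t) * (1 - p) ^ t :=
    mul_nonneg (pow_nonneg hp0 _) (pow_nonneg h1p _)
  have eA : ∑ b ∈ G.filter (fun b => cnt k true b = s),
        ENNReal.ofReal (p ^ cnt k true b * (1 - p) ^ cnt k false b)
      = (if s ≤ k ∧ k ≤ s + t - 1 then (k - 1).choose (s - 1) else 0) •
          ENNReal.ofReal (p ^ s * (1 - p) ^ (k - s)) := by
    have hA : ∀ b ∈ G.filter (fun b => cnt k true b = s),
        ENNReal.ofReal (p ^ cnt k true b * (1 - p) ^ cnt k false b)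
          = ENNReal.ofReal (p ^ s * (1 - p) ^ (k - s)) := by
      intro b hb
      obtain ⟨hbG, hc⟩ := Finset.mem_filter.1 hb
      have := cnt_true_add_false k b
      rw [hc, show cnt k false b = k - s from by omega]
    rw [Finset.sum_congr rfl hA, Finset.sum_const, hGdef, Finset.filter_filter,
      cardGA hs ht]
  have eB : ∑ b ∈ G.filter (fun b => ¬ cnt k true b = s),
        ENNReal.ofReal (p ^ cnt k true b * (1 - p) ^ cnt k false b)
      = (if t ≤ k ∧ k ≤ s + t - 1 then (k - 1).choose (t - 1) else 0) •
          ENNReal.ofReal (p ^ (k - t) * (1 - p) ^ t) := by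
    have hB : ∀ b ∈ G.filter (fun b => ¬ cnt k true b = s),
        ENNReal.ofReal (p ^ cnt k true b * (1 - p) ^ cnt k false b)
          = ENNReal.ofReal (p ^ (k - t) * (1 - p) ^ t) := by
      intro b hb
      obtain ⟨hbG, hc⟩ := Finset.mem_filter.1 hb
      rw [hGdef, Finset.mem_filter] at hbG
      have hhit := ((snbStop_eq_iff s t (extendB k b) k).1 hbG.2).1
      rw [numSuccesses_extendB, numFailures_extendB] at hhit
      have hft : cnt k false b = t := by tauto
      have := cnt_true_add_false k b
      rw [hft, show cnt k true b = k - t from by omega]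
    rw [Finset.sum_congr rfl hB, Finset.sum_const, hGdef, Finset.filter_filter,
      cardGB hs ht]
  rw [eA, eB]
  have hofm : ∀ (n : ℕ) (x : ℝ), 0 ≤ x →
      (n • ENNReal.ofReal x) = ENNReal.ofReal ((n : ℝ) * x) := by
    intro n x hx
    rw [nsmul_eq_mul, ← ENNReal.ofReal_natCast n, ← ENNReal.ofReal_mul (Nat.cast_nonneg n)]
  rw [hofm _ _ hx1, hofm _ _ hx2,
    ← ENNReal.ofReal_add (mul_nonneg (Nat.cast_nonneg _) hx1) (mul_nonneg (Nat.cast_nonneg _) hx2)]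
  congr 1
  by_cases hcA : s ≤ k ∧ k ≤ s + t - 1 <;> by_cases hcB : t ≤ k ∧ k ≤ s + t - 1
  · rw [if_pos hcA, if_pos hcA, if_pos hcB, if_pos hcB]; push_cast; ring
  · rw [if_pos hcA, if_pos hcA, if_neg hcB, if_neg hcB]; push_cast; ring
  · rw [if_neg hcA, if_neg hcA, if_pos hcB, if_pos hcB]; push_cast; ring
  · rw [if_neg hcA, if_neg hcA, if_neg hcB, if_neg hcB]; push_cast; ring
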